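/- arXiv:1603.08097 — 2 statements merged into one kernel-verified Lean document; each statement's English description precedes it below -/
import Mathlib

section
/- For every natural number j ≥ 1, the series ∑_{r=1}^∞ arctan( L_j²·F_j·L_{4jr} / (F_{4jr}² − F_{2j}² + L_j²) ) converges and its sum equals arctan( 1 / F_j ). -/
def lucas : ℕ → ℕ
  | 0 => 2
  | 1 => 1
  | n + 2 => lucas (n + 1) + lucas n

lemma lucas_fib : ∀ n : ℕ, lucas (n + 1) = Nat.fib n + Nat.fib (n + 2)
  | 0 => rfl
  | 1 => rfl
  | n + 2 => by
    show lucas (n + 2) + lucas (n + 1) = _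
    rw [lucas_fib (n + 1), lucas_fib n]
    simp [Nat.fib_add_two]
    ring

lemma lucas_pos (n : ℕ) : 0 < lucas n := by
  cases n with
  | zero => norm_num [lucas]
  | succ k =>
    rw [lucas_fib]
    have : 0 < Nat.fib (k + 2) := Nat.fib_pos.2 (by omega)
    omega

lemma cassini (n : ℕ) :
    (Nat.fib (n + 1) : ℤ) ^ 2 - Nat.fib (n + 1) * Nat.fib n - (Nat.fib n : ℤ) ^ 2
      = (-1) ^ n := by
  induction n with
  | zero => simp
  | succ k ih =>
    have h : (Nat.fib (k + 1 + 1) : ℤ) = Nat.fib (k + 1) + Nat.fib k := by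
      rw [show k + 1 + 1 = k + 2 from rfl, Nat.fib_add_two]; push_cast; ring
    rw [pow_succ, h]
    linear_combination -ih

lemma cassini_even (n : ℕ) :
    (Nat.fib (2 * n + 1) : ℝ) ^ 2 - Nat.fib (2 * n + 1) * Nat.fib (2 * n)
      - (Nat.fib (2 * n) : ℝ) ^ 2 = 1 := by
  have h := cassini (2 * n)
  rw [Even.neg_one_pow ⟨n, by ring⟩] at h
  exact_mod_cast h

lemma fib_shift (n k : ℕ) :
    (Nat.fib (n + k) : ℝ) = Nat.fib n * (Nat.fib (k + 1) - Nat.fib k)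
      + Nat.fib (n + 1) * Nat.fib k := by
  have h1 : (Nat.fib (n + k + 1) : ℝ)
      = Nat.fib n * Nat.fib k + Nat.fib (n + 1) * Nat.fib (k + 1) := by
    have := Nat.fib_add n k; exact_mod_cast congrArg (Nat.cast (R := ℝ)) this
  have h2 : (Nat.fib (n + (k + 1) + 1) : ℝ)
      = Nat.fib n * Nat.fib (k + 1) + Nat.fib (n + 1) * Nat.fib (k + 2) := by
    have := Nat.fib_add n (k + 1); exact_mod_cast congrArg (Nat.cast (R := ℝ)) this
  have h3 : (Nat.fib (n + k + 2) : ℝ) = Nat.fib (n + k + 1) + Nat.fib (n + k) := by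
    rw [Nat.fib_add_two]; push_cast; ring
  have h4 : (Nat.fib (k + 2) : ℝ) = Nat.fib (k + 1) + Nat.fib k := by
    rw [Nat.fib_add_two]; push_cast; ring
  have hidx : n + (k + 1) + 1 = n + k + 2 := by omega
  rw [hidx] at h2
  linear_combination h2 - h1 - h3 + (Nat.fib (n + 1) : ℝ) * h4

lemma fib_two_mul_lucas (j : ℕ) (hj : 1 ≤ j) : Nat.fib (2 * j) = Nat.fib j * lucas j := by
  cases j with
  | zero => omega
  | succ i =>
    rw [Nat.fib_two_mul, lucas_fib]
    have h : Nat.fib (i + 2) = Nat.fib i + Nat.fib (i + 1) := Nat.fib_add_two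
    congr 1
    rw [show i + 1 + 1 = i + 2 from rfl]
    omega

lemma lucas_cast_two (t : ℕ) :
    (lucas (t + 1) : ℝ) = 2 * Nat.fib (t + 2) - Nat.fib (t + 1) := by
  rw [lucas_fib]
  have h : (Nat.fib (t + 2) : ℝ) = Nat.fib (t + 1) + Nat.fib t := by
    rw [Nat.fib_add_two]; push_cast; ring
  push_cast
  linarith

set_option maxHeartbeats 1000000 in
lemma step (j r : ℕ) (hj : 1 ≤ j) :
    Real.arctan ((lucas j : ℝ) ^ 2 * (Nat.fib j : ℝ) * (lucas (4 * j * (1 + r)) : ℝ) /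
          ((Nat.fib (4 * j * (1 + r)) : ℝ) ^ 2 - (Nat.fib (2 * j) : ℝ) ^ 2
            + (lucas j : ℝ) ^ 2))
      = Real.arctan ((lucas j : ℝ) / (Nat.fib (2 * j * (2 * r + 1)) : ℝ))
        - Real.arctan ((lucas j : ℝ) / (Nat.fib (2 * j * (2 * r + 3)) : ℝ)) := by
  set m := 2 * j * (2 * r + 1) with hm
  have hm2 : 4 * j * (1 + r) = m + 2 * j := by rw [hm]; ring
  have hm4 : 2 * j * (2 * r + 3) = m + 4 * j := by rw [hm]; ring
  rw [hm2, hm4]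
  set A : ℝ := (Nat.fib m : ℝ) with hA
  set B : ℝ := (Nat.fib (m + 1) : ℝ) with hB
  set P : ℝ := (Nat.fib (2 * j) : ℝ) with hP
  set Q : ℝ := (Nat.fib (2 * j + 1) : ℝ) with hQ
  set L : ℝ := (lucas j : ℝ) with hL
  -- Cassini identities
  have hKm : B ^ 2 - B * A - A ^ 2 = 1 := by
    have := cassini_even (j * (2 * r + 1))
    rw [show 2 * (j * (2 * r + 1)) = m by rw [hm]; ring] at this
    linarith [this]
  have hKq : Q ^ 2 - Q * P - P ^ 2 = 1 := by
    have := cassini_even j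
    linarith [this]
  -- shift formulas
  have f1 : (Nat.fib (m + 2 * j) : ℝ) = A * (Q - P) + B * P := fib_shift m (2 * j)
  have f2 : (Nat.fib (m + 2 * j + 1) : ℝ) = A * P + B * Q := by
    have := Nat.fib_add m (2 * j)
    have h := congrArg (Nat.cast (R := ℝ)) this
    push_cast at h
    rw [h]
  have f3 : (Nat.fib (m + 4 * j) : ℝ)
      = (Nat.fib (m + 2 * j) : ℝ) * (Q - P) + (Nat.fib (m + 2 * j + 1) : ℝ) * P := by
    have := fib_shift (m + 2 * j) (2 * j)
    rw [show m + 2 * j + 2 * j = m + 4 * j by omega] at this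
    exact this
  have f4 : (lucas (m + 2 * j) : ℝ)
      = 2 * (Nat.fib (m + 2 * j + 1) : ℝ) - (Nat.fib (m + 2 * j) : ℝ) := by
    have hpos : 1 ≤ m + 2 * j := by omega
    obtain ⟨t, ht⟩ := Nat.exists_eq_add_of_le hpos
    rw [show m + 2 * j = t + 1 by omega]
    rw [show t + 1 + 1 = t + 2 by omega]
    exact lucas_cast_two t
  -- the two key identities
  have hE1 : (Nat.fib (m + 2 * j) : ℝ) ^ 2 - P ^ 2 = A * (Nat.fib (m + 4 * j) : ℝ) := by
    rw [f3, f1, f2]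
    linear_combination P ^ 2 * hKm
  have hE2 : (Nat.fib (m + 4 * j) : ℝ) - A = P * (lucas (m + 2 * j) : ℝ) := by
    rw [f4, f3, f1, f2]
    linear_combination A * hKq
  have hPL : P = (Nat.fib j : ℝ) * L := by
    rw [hP, hL, ← Nat.cast_mul, ← fib_two_mul_lucas j hj]
  -- positivity
  have hApos : 0 < A := by
    rw [hA]
    exact_mod_cast Nat.fib_pos.2 (by rw [hm]; exact Nat.mul_pos (by omega) (by omega))
  have hEpos : 0 < (Nat.fib (m + 4 * j) : ℝ) := by
    exact_mod_cast Nat.fib_pos.2 (by omega)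
  have hLpos : 0 < L := by rw [hL]; exact_mod_cast lucas_pos j
  set E : ℝ := (Nat.fib (m + 4 * j) : ℝ) with hE
  have hEpos' : 0 < E := hEpos
  have hAne : A ≠ 0 := ne_of_gt hApos
  have hEne : E ≠ 0 := ne_of_gt hEpos'
  have hxpos : 0 < L / A := div_pos hLpos hApos
  have hypos : 0 < L / E := div_pos hLpos hEpos'
  have hcond : (L / A) * (-(L / E)) < 1 := by
    rw [mul_neg]
    linarith [mul_pos hxpos hypos]
  have harc := Real.arctan_add hcond
  rw [Real.arctan_neg] at harc
  rw [show Real.arctan (L / A) - Real.arctan (L / E)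
      = Real.arctan (L / A) + -Real.arctan (L / E) by ring, harc]
  congr 1
  have hden : (0:ℝ) < A * E + L ^ 2 := by positivity
  have hdenne : A * E + L ^ 2 ≠ 0 := ne_of_gt hden
  have hne : (1:ℝ) - L / A * -(L / E) ≠ 0 := by
    have h1 : (0:ℝ) < L / A * (L / E) := mul_pos hxpos hypos
    have h2 : (1:ℝ) - L / A * -(L / E) = 1 + L / A * (L / E) := by ring
    rw [h2]
    positivity
  have hrhs : (L / A + -(L / E)) / (1 - L / A * -(L / E)) = L * (E - A) / (A * E + L ^ 2) := by
    rw [div_eq_div_iff hne hdenne]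
    field_simp
    ring
  rw [show (Nat.fib (m + 2 * j) : ℝ) ^ 2 - P ^ 2 + L ^ 2 = A * E + L ^ 2 by
    rw [hE1]]
  rw [hrhs, hE2, hPL]
  ring

theorem stmt6 (j : ℕ) (hj : 1 ≤ j) :
    HasSum (fun r : ℕ =>
        Real.arctan ((lucas j : ℝ) ^ 2 * (Nat.fib j : ℝ) * (lucas (4 * j * (1 + r)) : ℝ) /
          ((Nat.fib (4 * j * (1 + r)) : ℝ) ^ 2 - (Nat.fib (2 * j) : ℝ) ^ 2
            + (lucas j : ℝ) ^ 2)))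
      (Real.arctan (1 / (Nat.fib j : ℝ))) := by
  set L : ℝ := (lucas j : ℝ) with hL
  have hLpos : 0 < L := by rw [hL]; exact_mod_cast lucas_pos j
  set g : ℕ → ℝ := fun r => Real.arctan (L / (Nat.fib (2 * j * (2 * r + 1)) : ℝ)) with hg
  have key : ∀ r : ℕ, Real.arctan (L ^ 2 * (Nat.fib j : ℝ) * (lucas (4 * j * (1 + r)) : ℝ) /
      ((Nat.fib (4 * j * (1 + r)) : ℝ) ^ 2 - (Nat.fib (2 * j) : ℝ) ^ 2 + L ^ 2))
      = g r - g (r + 1) := by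
    intro r
    rw [hg]
    simp only []
    rw [show 2 * j * (2 * (r + 1) + 1) = 2 * j * (2 * r + 3) by ring]
    exact step j r hj
  have hfibpos : ∀ r : ℕ, 0 < (Nat.fib (2 * j * (2 * r + 1)) : ℝ) := by
    intro r
    exact_mod_cast Nat.fib_pos.2 (Nat.mul_pos (by omega) (by omega))
  have hmono : ∀ r : ℕ, g (r + 1) ≤ g r := by
    intro r
    apply Real.arctan_strictMono.monotone
    apply div_le_div_of_nonneg_left (le_of_lt hLpos) (hfibpos r)
    exact_mod_cast Nat.fib_mono (by nlinarith)
  have hnonneg : ∀ r : ℕ, 0 ≤ Real.arctan (L ^ 2 * (Nat.fib j : ℝ) *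
      (lucas (4 * j * (1 + r)) : ℝ) /
      ((Nat.fib (4 * j * (1 + r)) : ℝ) ^ 2 - (Nat.fib (2 * j) : ℝ) ^ 2 + L ^ 2)) := by
    intro r
    rw [key r]
    linarith [hmono r]
  have hg0 : g 0 = Real.arctan (1 / (Nat.fib j : ℝ)) := by
    rw [hg]
    simp only []
    rw [show 2 * j * (2 * 0 + 1) = 2 * j by ring]
    congr 1
    rw [fib_two_mul_lucas j hj]
    have hfj : (0 : ℝ) < (Nat.fib j : ℝ) := by exact_mod_cast Nat.fib_pos.2 hj
    push_cast
    rw [hL]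
    have hLne : (lucas j : ℝ) ≠ 0 := by exact_mod_cast (lucas_pos j).ne'
    field_simp
  have hgtendsto : Filter.Tendsto g Filter.atTop (nhds 0) := by
    have h0 : Filter.Tendsto (fun r : ℕ => L / (Nat.fib (2 * j * (2 * r + 1)) : ℝ))
        Filter.atTop (nhds 0) := by
      apply squeeze_zero' (g := fun r : ℕ => L / (r : ℝ))
      · filter_upwards [Filter.eventually_ge_atTop 1] with r hr
        positivity
      · filter_upwards [Filter.eventually_ge_atTop 1] with r hr
        apply div_le_div_of_nonneg_left (le_of_lt hLpos) (by positivity)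
        have h5 : 5 ≤ 2 * j * (2 * r + 1) := by nlinarith
        have h6 := Nat.le_fib_self h5
        have hle : r ≤ 2 * j * (2 * r + 1) := by nlinarith
        exact_mod_cast le_trans hle h6
      · exact tendsto_const_div_atTop_nhds_zero_nat L
    have := (Real.continuous_arctan.tendsto 0).comp h0
    simpa [Real.arctan_zero, Function.comp_def, hg] using this
  rw [hasSum_iff_tendsto_nat_of_nonneg hnonneg]
  have hsum : ∀ n : ℕ, ∑ i ∈ Finset.range n, Real.arctan (L ^ 2 * (Nat.fib j : ℝ) *
      (lucas (4 * j * (1 + i)) : ℝ) /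
      ((Nat.fib (4 * j * (1 + i)) : ℝ) ^ 2 - (Nat.fib (2 * j) : ℝ) ^ 2 + L ^ 2))
      = g 0 - g n := by
    intro n
    rw [← Finset.sum_range_sub' g n]
    exact Finset.sum_congr rfl fun i _ => key i
  simp only [hsum]
  rw [← hg0]
  have := Filter.Tendsto.const_sub (g 0) hgtendsto
  simpa using this
end

section
/- For every natural number j ≥ 1, the series ∑_{r=1}^∞ arctan( √(5·L_{4j−2})·L_{2j−1}·F_{(4j−2)r−2j+1} / L_{2((4j−2)r−2j+1)} ) converges and its sum equals π/2. -/
open Real goldenRatio Filter Finset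

lemma lucas_binet : ∀ n : ℕ, (lucas n : ℝ) = φ ^ n + ψ ^ n
  | 0 => by norm_num [lucas]
  | 1 => by norm_num [lucas]
  | n + 2 => by
    have h1 := lucas_binet (n + 1)
    have h2 := lucas_binet n
    rw [show lucas (n + 2) = lucas (n + 1) + lucas n from rfl]
    push_cast
    rw [h1, h2]
    linear_combination (-(φ ^ n)) * goldenRatio_sq + (-(ψ ^ n)) * goldenConj_sq

lemma le_fib_two_mul : ∀ r : ℕ, r ≤ Nat.fib (2 * r)
  | 0 => by simp
  | r + 1 => by
    have h := le_fib_two_mul r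
    have h2 : 0 < Nat.fib (2 * r + 1) := Nat.fib_pos.mpr (by omega)
    have e : 2 * (r + 1) = 2 * r + 2 := by ring
    rw [e, Nat.fib_add_two]
    omega

lemma arctan_sub_arctan {u v : ℝ} (hu : 0 ≤ u) (huv : u ≤ v) :
    Real.arctan v - Real.arctan u = Real.arctan ((v - u) / (1 + u * v)) := by
  have hv : 0 ≤ v := hu.trans huv
  have hpos : 0 < 1 + u * v := by positivity
  set t := (v - u) / (1 + u * v) with ht
  have hut : u * t < 1 := by
    rw [ht, ← mul_div_assoc, div_lt_one hpos]
    nlinarith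
  have h1 : 1 - u * t ≠ 0 := by nlinarith
  have harg : (u + t) / (1 - u * t) = v := by
    rw [div_eq_iff h1, ht]
    field_simp
    ring
  have := Real.arctan_add hut
  rw [harg] at this
  linarith

lemma arg_eq (c x u s : ℝ) (hc : 0 < c) (hx : 0 < x) (hu : 0 < u) (hs : 0 < s)
    (hc2 : c ^ 2 = x ^ 2 + (x ^ 2)⁻¹) :
    s * c * (x - x⁻¹) * ((u * x + (u * x)⁻¹) / s) / (u ^ 2 * x ^ 2 + (u ^ 2 * x ^ 2)⁻¹) =
      ((u * x ^ 2 - (u * x ^ 2)⁻¹) / c - (u - u⁻¹) / c) /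
        (1 + (u - u⁻¹) / c * ((u * x ^ 2 - (u * x ^ 2)⁻¹) / c)) := by
  have hcne : c ≠ 0 := ne_of_gt hc
  have hxne : x ≠ 0 := ne_of_gt hx
  have hune : u ≠ 0 := ne_of_gt hu
  have hsne : s ≠ 0 := ne_of_gt hs
  have e3 : c ^ 2 + (u - u⁻¹) * (u * x ^ 2 - (u * x ^ 2)⁻¹) =
      u ^ 2 * x ^ 2 + (u ^ 2 * x ^ 2)⁻¹ := by
    rw [hc2]; field_simp; ring
  have h1 : 1 + (u - u⁻¹) / c * ((u * x ^ 2 - (u * x ^ 2)⁻¹) / c) =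
      (u ^ 2 * x ^ 2 + (u ^ 2 * x ^ 2)⁻¹) / c ^ 2 := by
    rw [← e3]; field_simp
  rw [h1]
  have hD : (0:ℝ) < u ^ 2 * x ^ 2 + (u ^ 2 * x ^ 2)⁻¹ := by positivity
  field_simp
  ring

theorem stmt16 (j : ℕ) (hj : 1 ≤ j) :
    HasSum (fun r : ℕ =>
        Real.arctan (Real.sqrt (5 * (lucas (4 * j - 2) : ℝ)) * (lucas (2 * j - 1) : ℝ) *
            (Nat.fib ((4 * j - 2) * (1 + r) + 1 - 2 * j) : ℝ) /
          (lucas (2 * ((4 * j - 2) * (1 + r) + 1 - 2 * j)) : ℝ)))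
      (Real.pi / 2) := by
  set a := 2 * j - 1 with hadef
  have haodd : Odd a := ⟨j - 1, by omega⟩
  have ha1 : 1 ≤ a := by omega
  set x := φ ^ a with hxdef
  have hx1 : 1 < x := one_lt_pow₀ one_lt_goldenRatio (by omega)
  have hx0 : (0:ℝ) < x := by linarith
  have hxne : x ≠ 0 := ne_of_gt hx0
  have hy : ψ ^ a = -x⁻¹ := by
    have h1 : x * ψ ^ a = -1 := by
      rw [hxdef, ← mul_pow, goldenRatio_mul_goldenConj, haodd.neg_one_pow]
    have h2 : ψ ^ a = -1 / x := by
      rw [eq_div_iff hxne]; linarith [h1]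
    rw [h2, neg_div, one_div]
  have hfib : ∀ n : ℕ, (Nat.fib (a * n) : ℝ) = (x ^ n - (-x⁻¹) ^ n) / √5 := by
    intro n; rw [Real.coe_fib_eq, pow_mul, pow_mul, hy, ← hxdef]
  have hluc : ∀ n : ℕ, (lucas (a * n) : ℝ) = x ^ n + (-x⁻¹) ^ n := by
    intro n; rw [lucas_binet, pow_mul, pow_mul, hy, ← hxdef]
  have h5 : (0:ℝ) < √5 := Real.sqrt_pos.mpr (by norm_num)
  have h5ne : √5 ≠ 0 := ne_of_gt h5
  have hfibE : ∀ n : ℕ, (Nat.fib (a * (2 * n)) : ℝ) = (x ^ (2 * n) - (x ^ (2 * n))⁻¹) / √5 := by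
    intro n; rw [hfib, Even.neg_pow ⟨n, by ring⟩, inv_pow]
  have hfibO : ∀ n : ℕ, (Nat.fib (a * (2 * n + 1)) : ℝ) =
      (x ^ (2 * n + 1) + (x ^ (2 * n + 1))⁻¹) / √5 := by
    intro n; rw [hfib, Odd.neg_pow ⟨n, by ring⟩, inv_pow, sub_neg_eq_add]
  have hlucE : ∀ n : ℕ, (lucas (a * (2 * n)) : ℝ) = x ^ (2 * n) + (x ^ (2 * n))⁻¹ := by
    intro n; rw [hluc, Even.neg_pow ⟨n, by ring⟩, inv_pow]
  have hluca : (lucas a : ℝ) = x - x⁻¹ := by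
    have := hluc 1; simpa [sub_eq_add_neg] using this
  have hLval : (lucas (a * 2) : ℝ) = x ^ 2 + (x ^ 2)⁻¹ := by
    have := hlucE 1; simpa using this
  have hLpos : (0:ℝ) < (lucas (a * 2) : ℝ) := by rw [hLval]; positivity
  set c := √((lucas (a * 2) : ℝ)) with hcdef
  have hc0 : (0:ℝ) < c := Real.sqrt_pos.mpr hLpos
  have hcne : c ≠ 0 := ne_of_gt hc0
  have hc2 : c ^ 2 = x ^ 2 + (x ^ 2)⁻¹ := by
    rw [hcdef, Real.sq_sqrt hLpos.le, hLval]
  have h5L : √(5 * (lucas (a * 2) : ℝ)) = √5 * c := by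
    rw [Real.sqrt_mul (by norm_num : (0:ℝ) ≤ 5), hcdef]
  set G : ℕ → ℝ := fun k => Real.arctan (√5 * (Nat.fib (a * (2 * k)) : ℝ) / c) with hGdef
  have hw : ∀ k : ℕ, √5 * (Nat.fib (a * (2 * k)) : ℝ) / c = (x ^ (2 * k) - (x ^ (2 * k))⁻¹) / c := by
    intro k; rw [hfibE]; field_simp
  have hupos : ∀ k : ℕ, (0:ℝ) < x ^ k := fun k => pow_pos hx0 k
  have hu1 : ∀ k : ℕ, (1:ℝ) ≤ x ^ k := fun k => one_le_pow₀ hx1.le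
  have hw0 : ∀ k : ℕ, 0 ≤ (x ^ (2 * k) - (x ^ (2 * k))⁻¹) / c := by
    intro k
    apply div_nonneg _ hc0.le
    have h1 := hu1 (2 * k)
    have h2 : (x ^ (2 * k))⁻¹ ≤ 1 := inv_le_one_of_one_le₀ h1
    linarith
  have key : ∀ r : ℕ,
      Real.arctan (√(5 * (lucas (a * 2) : ℝ)) * (lucas a : ℝ) * (Nat.fib (a * (2 * r + 1)) : ℝ) /
          (lucas (a * (2 * (2 * r + 1))) : ℝ)) = G (r + 1) - G r := by
    intro r
    have hup : (0:ℝ) < x ^ (2 * r) := hupos (2 * r)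
    have hu1' : (1:ℝ) ≤ x ^ (2 * r) := hu1 (2 * r)
    have p1 : x ^ (2 * (r + 1)) = x ^ (2 * r) * x ^ 2 := by
      rw [show 2 * (r + 1) = 2 * r + 2 from by ring, pow_add]
    have p2 : x ^ (2 * r + 1) = x ^ (2 * r) * x := pow_succ x (2 * r)
    have p3 : x ^ (2 * (2 * r + 1)) = (x ^ (2 * r)) ^ 2 * x ^ 2 := by
      rw [show 2 * (2 * r + 1) = 2 * r + (2 * r + 2) from by ring, pow_add, pow_add]
      ring
    have hle : (x ^ (2 * r) - (x ^ (2 * r))⁻¹) / c ≤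
        (x ^ (2 * (r + 1)) - (x ^ (2 * (r + 1)))⁻¹) / c := by
      rw [p1]
      have hxsq : (1:ℝ) ≤ x ^ 2 := by nlinarith
      have hmul : x ^ (2 * r) ≤ x ^ (2 * r) * x ^ 2 := le_mul_of_one_le_right hup.le hxsq
      have hinv : (x ^ (2 * r) * x ^ 2)⁻¹ ≤ (x ^ (2 * r))⁻¹ := by
        apply inv_anti₀ hup hmul
      gcongr
    rw [hGdef]
    simp only
    rw [hw, hw, arctan_sub_arctan (hw0 r) hle]
    rw [h5L, hluca, hfibO r, hlucE (2 * r + 1), p1, p2, p3]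
    congr 1
    exact arg_eq c x (x ^ (2 * r)) (√5) hc0 hx0 hup h5 hc2
  have e4j : 4 * j - 2 = a * 2 := by omega
  have em : ∀ r : ℕ, (4 * j - 2) * (1 + r) + 1 - 2 * j = a * (2 * r + 1) := by
    intro r
    have h : (4 * j - 2) * (1 + r) = a * (2 * r + 1) + a := by
      rw [e4j]; ring
    omega
  have hfun : ∀ r : ℕ,
      Real.arctan (√(5 * (lucas (4 * j - 2) : ℝ)) * (lucas a : ℝ) *
          (Nat.fib ((4 * j - 2) * (1 + r) + 1 - 2 * j) : ℝ) /
        (lucas (2 * ((4 * j - 2) * (1 + r) + 1 - 2 * j)) : ℝ)) = G (r + 1) - G r := by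
    intro r
    rw [em r, show 2 * (a * (2 * r + 1)) = a * (2 * (2 * r + 1)) from by ring, e4j]
    exact key r
  have hnonneg : ∀ r : ℕ, 0 ≤
      Real.arctan (√(5 * (lucas (4 * j - 2) : ℝ)) * (lucas a : ℝ) *
          (Nat.fib ((4 * j - 2) * (1 + r) + 1 - 2 * j) : ℝ) /
        (lucas (2 * ((4 * j - 2) * (1 + r) + 1 - 2 * j)) : ℝ)) := by
    intro r
    rw [← Real.arctan_zero]
    apply Real.arctan_strictMono.monotone
    positivity
  rw [hasSum_iff_tendsto_nat_of_nonneg hnonneg]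
  have hG0 : G 0 = 0 := by
    rw [hGdef]; simp
  have hsum : ∀ n : ℕ, (∑ i ∈ Finset.range n,
      Real.arctan (√(5 * (lucas (4 * j - 2) : ℝ)) * (lucas a : ℝ) *
          (Nat.fib ((4 * j - 2) * (1 + i) + 1 - 2 * j) : ℝ) /
        (lucas (2 * ((4 * j - 2) * (1 + i) + 1 - 2 * j)) : ℝ))) = G n := by
    intro n
    rw [Finset.sum_congr rfl (fun i _ => hfun i), Finset.sum_range_sub G n, hG0, sub_zero]
  have hwt : Tendsto (fun k : ℕ => √5 * (Nat.fib (a * (2 * k)) : ℝ) / c) atTop atTop := by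
    have hge : ∀ k : ℕ, (k : ℝ) * (√5 / c) ≤ √5 * (Nat.fib (a * (2 * k)) : ℝ) / c := by
      intro k
      have h1 : k ≤ Nat.fib (a * (2 * k)) := by
        refine le_trans (le_fib_two_mul k) (Nat.fib_mono ?_)
        exact Nat.le_mul_of_pos_left _ (by omega)
      have h2 : (k : ℝ) ≤ (Nat.fib (a * (2 * k)) : ℝ) := by exact_mod_cast h1
      have e : (k : ℝ) * (√5 / c) = √5 * (k : ℝ) / c := by ring
      rw [e]
      gcongr
    apply tendsto_atTop_mono hge
    exact Tendsto.atTop_mul_const (by positivity) tendsto_natCast_atTop_atTop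
  have hGt : Tendsto G atTop (nhds (Real.pi / 2)) := by
    rw [hGdef]
    exact (Real.tendsto_arctan_atTop.mono_right nhdsWithin_le_nhds).comp hwt
  exact (tendsto_congr hsum).mpr hGt
end
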